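/- Let (X,ρ) be a metric space with ρ ≤ 1, Q a probability distribution over X, and τ ∈ (0,1). Let c, t ∈ X such that Q[{x : ρ(x,c) < ρ(t,c)}] ≤ τ. Then E_{X∼Q}[ρ(X,t)] ≤ (1 + 1/(1−τ)) · E_{X∼Q}[ρ(X,c)]. -/

import Mathlib

open MeasureTheory

theorem stmt0 {X : Type*} [MetricSpace X] [MeasurableSpace X] [BorelSpace X]
    (Q : Measure X) [IsProbabilityMeasure Q]
    (hbound : ∀ x y : X, dist x y ≤ 1)
    (τ : ℝ) (hτ : τ ∈ Set.Ioo (0:ℝ) 1)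
    (c t : X)
    (hmass : Q {x | dist x c < dist t c} ≤ ENNReal.ofReal τ) :
    ∫ x, dist x t ∂Q ≤ (1 + 1/(1 - τ)) * ∫ x, dist x c ∂Q := by
  obtain ⟨hτ0, hτ1⟩ := hτ
  have h1τ : (0:ℝ) < 1 - τ := by linarith
  set r := dist t c with hr
  have hrnn : 0 ≤ r := dist_nonneg
  have intc : Integrable (fun x => dist x c) Q := by
    refine Integrable.mono' (integrable_const 1) ((continuous_id.dist continuous_const).aestronglyMeasurable) ?_
    filter_upwards with x
    rw [Real.norm_eq_abs, abs_of_nonneg dist_nonneg]; exact hbound x c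
  have intt : Integrable (fun x => dist x t) Q := by
    refine Integrable.mono' (integrable_const 1) ((continuous_id.dist continuous_const).aestronglyMeasurable) ?_
    filter_upwards with x
    rw [Real.norm_eq_abs, abs_of_nonneg dist_nonneg]; exact hbound x t
  -- mass of S
  set S : Set X := {x | r ≤ dist x c} with hS
  have hSmeas : MeasurableSet S :=
    (isClosed_le continuous_const (continuous_id.dist continuous_const)).measurableSet
  have hScompl : Sᶜ = {x | dist x c < r} := by
    ext x; simp [hS, not_le]
  have hQS : 1 - ENNReal.ofReal τ ≤ Q S := by
    have := measure_compl hSmeas (measure_ne_top Q S)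
    rw [hScompl] at this
    have htot : Q S + Q Sᶜ = 1 := by
      rw [measure_add_measure_compl hSmeas, measure_univ]
    rw [hScompl] at htot
    calc 1 - ENNReal.ofReal τ ≤ 1 - Q {x | dist x c < r} :=
          tsub_le_tsub_left hmass 1
      _ ≤ Q S := by
          rw [← htot]
          exact tsub_le_iff_right.mpr (le_refl _)
  have hQSreal : 1 - τ ≤ (Q S).toReal := by
    have h1 : (1 - ENNReal.ofReal τ).toReal ≤ (Q S).toReal :=
      ENNReal.toReal_mono (measure_ne_top Q S) hQS
    rwa [ENNReal.toReal_sub_of_le (by simpa using ENNReal.ofReal_le_one.mpr hτ1.le) (by simp),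
      ENNReal.toReal_one, ENNReal.toReal_ofReal hτ0.le] at h1
  -- lower bound on ∫ dist x c
  have hlow : r * (1 - τ) ≤ ∫ x, dist x c ∂Q := by
    have h1 : r * (1 - τ) ≤ r * (Q S).toReal :=
      mul_le_mul_of_nonneg_left hQSreal hrnn
    have h2 : r * (Q S).toReal = ∫ x in S, r ∂Q := by
      rw [setIntegral_const, smul_eq_mul, mul_comm]; rfl
    have h3 : ∫ x in S, r ∂Q ≤ ∫ x in S, dist x c ∂Q := by
      refine setIntegral_mono_on (integrableOn_const (measure_ne_top Q S))
        (intc.integrableOn) hSmeas ?_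
      intro x hx; exact hx
    have h4 : ∫ x in S, dist x c ∂Q ≤ ∫ x, dist x c ∂Q := by
      refine setIntegral_le_integral intc ?_
      filter_upwards with x using dist_nonneg
    linarith
  have hrle : r ≤ (1/(1-τ)) * ∫ x, dist x c ∂Q := by
    rw [div_mul_eq_mul_div, one_mul, le_div_iff₀ h1τ]
    linarith [hlow]
  -- triangle inequality
  have htri : ∫ x, dist x t ∂Q ≤ (∫ x, dist x c ∂Q) + r := by
    have : ∫ x, dist x t ∂Q ≤ ∫ x, (dist x c + r) ∂Q := by
      refine integral_mono intt (intc.add (integrable_const r)) ?_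
      intro x; simpa [hr, dist_comm] using dist_triangle x c t
    rwa [integral_add intc (integrable_const r), integral_const, probReal_univ,
      one_smul] at this
  have hnn : 0 ≤ ∫ x, dist x c ∂Q := integral_nonneg fun x => dist_nonneg
  calc ∫ x, dist x t ∂Q ≤ (∫ x, dist x c ∂Q) + r := htri
    _ ≤ (∫ x, dist x c ∂Q) + (1/(1-τ)) * ∫ x, dist x c ∂Q := by linarith
    _ = (1 + 1/(1 - τ)) * ∫ x, dist x c ∂Q := by ring
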